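/- Let ε > 0 and W_ε(x) = (1/(2ε)) e^{−|x|/ε}. Let u : ℝ × ℝ → ℝ (time and space) and fix a time t. Assume: u(t,·) is nonnegative, integrable, and attains a global maximum at x* ∈ ℝ; u(t,·) is differentiable at x* (so ∂_x u(t,x*) = 0); and the function s ↦ u(s,x*) is differentiable at t with derivative ∂_t u(t,x*) = ∂_x u(t,x*) · ∂_x(W_ε ∗ u(t,·))(x*) − ε⁻² (u(t,x*) − (W_ε ∗ u(t,·))(x*)). Then ∂_t u(t,x*) ≤ 0. -/

import Mathlib

open MeasureTheory

/-- The exponential mollifier profile is integrable. -/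
lemma exp_neg_abs_integrable : Integrable (fun x : ℝ => Real.exp (-|x|)) := by
  have h1 : IntegrableOn (fun x : ℝ => Real.exp (-|x|)) (Set.Ioi 0) := by
    apply (exp_neg_integrableOn_Ioi 0 one_pos).congr_fun ?_ measurableSet_Ioi
    intro x hx
    have hx' : (0:ℝ) < x := hx
    simp [abs_of_pos hx']
  have h2 : IntegrableOn (fun x : ℝ => Real.exp (-|x|)) (Set.Iic 0) := by
    apply (integrableOn_exp_Iic 0).congr_fun ?_ measurableSet_Iic
    intro x hx
    have hx' : x ≤ (0:ℝ) := hx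
    simp [abs_of_nonpos hx']
  have := h2.union h1
  rwa [Set.Iic_union_Ioi, integrableOn_univ] at this

lemma exp_neg_abs_div_integrable {ε : ℝ} (hε : 0 < ε) :
    Integrable (fun x : ℝ => Real.exp (-|x| / ε)) := by
  have h := (integrable_comp_mul_left_iff (fun x : ℝ => Real.exp (-|x|))
      (R := ε⁻¹) (inv_ne_zero hε.ne')).mpr exp_neg_abs_integrable
  have heq : (fun x : ℝ => Real.exp (-|x| / ε)) = fun x => Real.exp (-|ε⁻¹ * x|) := by
    funext x
    rw [abs_mul, abs_of_pos (inv_pos.mpr hε), neg_div, div_eq_inv_mul]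
  rw [heq]
  exact h

lemma integral_exp_neg_abs_div {ε : ℝ} (hε : 0 < ε) :
    ∫ x : ℝ, Real.exp (-|x| / ε) = 2 * ε := by
  have : (fun x : ℝ => Real.exp (-|x| / ε)) = fun x => (fun s => Real.exp (-s / ε)) |x| := rfl
  rw [this, integral_comp_abs (f := fun s => Real.exp (-s / ε))]
  have h := integral_comp_mul_left_Ioi (fun x => Real.exp (-x)) 0 (inv_pos.mpr hε)
  simp only [mul_zero] at h
  have heq : (fun x : ℝ => Real.exp (-x / ε)) = fun x => Real.exp (-(ε⁻¹ * x)) := by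
    funext x; rw [neg_div, div_eq_inv_mul]
  rw [heq, h, integral_exp_neg_Ioi_zero, smul_eq_mul, mul_one, inv_inv]

/-- Maximum-principle step: if at time `t` the solution `u(t,·)` attains a global maximum at
`x*`, is differentiable there, and the time derivative at `(t,x*)` is given by the rewritten
nonlocal equation `∂_t u = ∂_x u · ∂_x(W_ε ∗ u) − ε⁻²(u − W_ε ∗ u)`, then `∂_t u(t,x*) ≤ 0`. -/
theorem maximum_principle_time_derivative_nonpos (ε : ℝ) (hε : 0 < ε)
    (Wε : ℝ → ℝ) (hW : ∀ x, Wε x = (1 / (2 * ε)) * Real.exp (-|x| / ε))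
    (u : ℝ → ℝ → ℝ) (t : ℝ)
    (hnonneg : ∀ x, 0 ≤ u t x)
    (hmeas : Measurable (u t))
    (hint : Integrable (u t) (volume : Measure ℝ))
    (xstar : ℝ) (hmax : ∀ x, u t x ≤ u t xstar)
    (dx : ℝ) (hdx : HasDerivAt (fun x => u t x) dx xstar)
    (dt : ℝ) (hdt : HasDerivAt (fun s => u s xstar) dt t)
    (heq : dt = dx * deriv (fun z => ∫ y : ℝ, Wε (z - y) * u t y) xstar
        - ε⁻¹ ^ 2 * (u t xstar - ∫ y : ℝ, Wε (xstar - y) * u t y)) :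
    dt ≤ 0 := by
  -- the spatial derivative vanishes at the global max
  have hdx0 : dx = 0 := by
    have hloc : IsLocalMax (fun x => u t x) xstar :=
      (isMaxOn_univ_iff.mpr hmax).isLocalMax Filter.univ_mem
    have := hloc.deriv_eq_zero
    rwa [hdx.deriv] at this
  -- the kernel as a function of y
  set M := u t xstar with hM
  have hWeq : (fun y : ℝ => Wε (xstar - y))
      = fun y => (1 / (2 * ε)) * Real.exp (-|xstar - y| / ε) := by
    funext y; exact hW _
  have hWnonneg : ∀ y : ℝ, 0 ≤ Wε (xstar - y) := by
    intro y; rw [hW]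
    positivity
  -- integrability of the kernel
  have hWint : Integrable (fun y : ℝ => Wε (xstar - y)) := by
    rw [hWeq]
    have h1 : Integrable (fun y : ℝ => Real.exp (-|xstar - y| / ε)) :=
      (integrable_comp_sub_left (fun x : ℝ => Real.exp (-|x| / ε)) xstar).mpr
        (exp_neg_abs_div_integrable hε)
    exact h1.const_mul _
  -- the kernel integrates to 1
  have hWone : ∫ y : ℝ, Wε (xstar - y) = 1 := by
    rw [hWeq, integral_const_mul,
      integral_sub_left_eq_self (fun x : ℝ => Real.exp (-|x| / ε)) volume xstar,
      integral_exp_neg_abs_div hε]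
    field_simp
  -- integrability of the integrands
  have hcont : Continuous (fun y : ℝ => Wε (xstar - y)) := by
    rw [hWeq]; fun_prop
  have hprod : Integrable (fun y : ℝ => Wε (xstar - y) * u t y) :=
    hint.bdd_mul hcont.aestronglyMeasurable
      (c := 1 / (2 * ε)) (Filter.Eventually.of_forall fun y => by
        rw [hW, Real.norm_eq_abs, abs_of_nonneg (by positivity)]
        have : Real.exp (-|xstar - y| / ε) ≤ 1 := by
          rw [Real.exp_le_one_iff]
          exact div_nonpos_of_nonpos_of_nonneg (neg_nonpos.mpr (abs_nonneg _)) hε.le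
        exact mul_le_of_le_one_right (by positivity) this)
  have hprodM : Integrable (fun y : ℝ => Wε (xstar - y) * M) := hWint.mul_const M
  -- the convolution is at most the max value
  have hconv : (∫ y : ℝ, Wε (xstar - y) * u t y) ≤ M := by
    calc (∫ y : ℝ, Wε (xstar - y) * u t y) ≤ ∫ y : ℝ, Wε (xstar - y) * M := by
          apply integral_mono hprod hprodM
          intro y
          exact mul_le_mul_of_nonneg_left (hmax y) (hWnonneg y)
      _ = M := by rw [integral_mul_const, hWone, one_mul]
  rw [heq, hdx0, zero_mul, zero_sub, neg_nonpos]
  have : (0:ℝ) ≤ M - ∫ y : ℝ, Wε (xstar - y) * u t y := sub_nonneg.mpr hconv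
  positivity
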